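/- arXiv:2202.01185 — 2 statements merged into one kernel-verified Lean document; each statement's English description precedes it below -/
import Mathlib

section
/- For α > 0, the scalar curvature function R_α tends to 8/(π²α²) as r → ∞, and consequently inf_{r > 0} R_α(r) = 8/(π²α²). -/
open Real

/-- Warping function `φ_α(r) = α · arctan(r/α)`. -/
noncomputable def warp (α : ℝ) : ℝ → ℝ := fun r => α * arctan (r / α)

/-- Scalar curvature of the rotationally symmetric metric `dr² + φ_α(r)² g_{S²}`:
`R_α(r) = 2(−2φ_α''(r)/φ_α(r) + (1 − φ_α'(r)²)/φ_α(r)²)`. -/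
noncomputable def scalarCurv (α : ℝ) : ℝ → ℝ := fun r =>
  2 * (-2 * deriv (deriv (warp α)) r / warp α r
        + (1 - (deriv (warp α) r) ^ 2) / (warp α r) ^ 2)

lemma hasDerivAt_warp {α : ℝ} (hα : 0 < α) (r : ℝ) :
    HasDerivAt (warp α) (α ^ 2 / (α ^ 2 + r ^ 2)) r := by
  have h1 : HasDerivAt (fun r : ℝ => r / α) (1 / α) r := by
    simpa using (hasDerivAt_id r).div_const α
  have h3 := ((Real.hasDerivAt_arctan (r / α)).comp r h1).const_mul α
  refine h3.congr_deriv ?_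
  have h4 : α ^ 2 + r ^ 2 > 0 := by positivity
  field_simp

lemma deriv_warp {α : ℝ} (hα : 0 < α) :
    deriv (warp α) = fun r => α ^ 2 / (α ^ 2 + r ^ 2) :=
  funext fun r => (hasDerivAt_warp hα r).deriv

lemma deriv2_warp {α : ℝ} (hα : 0 < α) (r : ℝ) :
    deriv (deriv (warp α)) r = -2 * α ^ 2 * r / (α ^ 2 + r ^ 2) ^ 2 := by
  rw [deriv_warp hα]
  have hpos : (0:ℝ) < α ^ 2 + r ^ 2 := by positivity
  have h1 : HasDerivAt (fun r : ℝ => α ^ 2 + r ^ 2) (2 * r) r := by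
    simpa using ((hasDerivAt_pow 2 r).const_add (α ^ 2))
  have h2 := (hasDerivAt_const r (α ^ 2)).div h1 (ne_of_gt hpos)
  rw [show (fun r : ℝ => α ^ 2 / (α ^ 2 + r ^ 2)) = ((fun x => α ^ 2) / fun r => α ^ 2 + r ^ 2) from rfl, h2.deriv]
  field_simp
  ring

lemma scalarCurv_eq {α : ℝ} (hα : 0 < α) (r : ℝ) :
    scalarCurv α r =
      2 * (-2 * (-2 * α ^ 2 * r / (α ^ 2 + r ^ 2) ^ 2) / (α * arctan (r / α))
        + (1 - (α ^ 2 / (α ^ 2 + r ^ 2)) ^ 2) / (α * arctan (r / α)) ^ 2) := by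
  unfold scalarCurv
  rw [deriv2_warp hα r, deriv_warp hα]
  simp only [warp]

open Filter Topology

lemma scalarCurv_tendsto {α : ℝ} (hα : 0 < α) :
    Tendsto (scalarCurv α) atTop (nhds (8 / (π ^ 2 * α ^ 2))) := by
  have hπ := Real.pi_pos
  have hdiv : Tendsto (fun r : ℝ => r / α) atTop atTop :=
    tendsto_id.atTop_div_const hα
  have hA : Tendsto (fun r : ℝ => arctan (r / α)) atTop (nhds (π / 2)) :=
    (Real.tendsto_arctan_atTop.mono_right nhdsWithin_le_nhds).comp hdiv
  have hφ : Tendsto (fun r : ℝ => α * arctan (r / α)) atTop (nhds (α * (π / 2))) :=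
    hA.const_mul α
  have hφne : α * (π / 2) ≠ 0 := by positivity
  have hden : Tendsto (fun r : ℝ => α ^ 2 + r ^ 2) atTop atTop :=
    tendsto_atTop_add_const_left _ _ (tendsto_pow_atTop two_ne_zero)
  have hB : Tendsto (fun r : ℝ => α ^ 2 / (α ^ 2 + r ^ 2)) atTop (nhds 0) :=
    tendsto_const_nhds.div_atTop hden
  have hC : Tendsto (fun r : ℝ => -2 * α ^ 2 * r / (α ^ 2 + r ^ 2) ^ 2) atTop (nhds 0) := by
    have hlo : Tendsto (fun r : ℝ => -2 * α ^ 2 / (α ^ 2 + r ^ 2)) atTop (nhds 0) :=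
      tendsto_const_nhds.div_atTop hden
    refine tendsto_of_tendsto_of_tendsto_of_le_of_le' hlo tendsto_const_nhds ?_ ?_
    · filter_upwards [eventually_ge_atTop (1:ℝ)] with r hr
      have hp : (0:ℝ) < α ^ 2 + r ^ 2 := by positivity
      rw [div_le_div_iff₀ hp (by positivity)]
      nlinarith [mul_nonneg (mul_nonneg (sq_nonneg α) hp.le) (show (0:ℝ) ≤ α^2 + r^2 - r by nlinarith)]
    · filter_upwards [eventually_ge_atTop (1:ℝ)] with r hr
      apply div_nonpos_of_nonpos_of_nonneg
      · nlinarith [sq_nonneg α]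
      · positivity
  have hmain : Tendsto
      (fun r : ℝ => 2 * (-2 * (-2 * α ^ 2 * r / (α ^ 2 + r ^ 2) ^ 2) / (α * arctan (r / α))
        + (1 - (α ^ 2 / (α ^ 2 + r ^ 2)) ^ 2) / (α * arctan (r / α)) ^ 2)) atTop
      (nhds (2 * (-2 * (0:ℝ) / (α * (π / 2)) + (1 - (0:ℝ) ^ 2) / (α * (π / 2)) ^ 2))) :=
    (((hC.const_mul (-2)).div hφ hφne).add
      ((tendsto_const_nhds.sub (hB.pow 2)).div (hφ.pow 2) (pow_ne_zero 2 hφne))).const_mul 2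
  have heq : (2 * (-2 * (0:ℝ) / (α * (π / 2)) + (1 - (0:ℝ) ^ 2) / (α * (π / 2)) ^ 2))
      = 8 / (π ^ 2 * α ^ 2) := by
    field_simp
    ring
  rw [← heq]
  exact hmain.congr fun r => (scalarCurv_eq hα r).symm

lemma scalarCurv_lower {α : ℝ} (hα : 0 < α) {r : ℝ} (hr : 0 < r) :
    8 / (π ^ 2 * α ^ 2) ≤ scalarCurv α r := by
  have hπ := Real.pi_pos
  rw [scalarCurv_eq hα r]
  set u := arctan (r / α) with hu
  have hu0 : 0 < u := by rw [hu, ← Real.arctan_zero]; exact Real.arctan_strictMono (div_pos hr hα)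
  have huπ : u < π / 2 := Real.arctan_lt_pi_div_two _
  have hp : (0:ℝ) < α ^ 2 + r ^ 2 := by positivity
  -- sin u squared
  have hsin : 2 / π * u ≤ Real.sin u := Real.mul_le_sin hu0.le huπ.le
  have hsin2 : (2 / π * u) ^ 2 ≤ r ^ 2 / (α ^ 2 + r ^ 2) := by
    have h1 : Real.sin u = (r / α) / Real.sqrt (1 + (r / α) ^ 2) := Real.sin_arctan _
    have h2 : (Real.sin u) ^ 2 = r ^ 2 / (α ^ 2 + r ^ 2) := by
      rw [h1, div_pow, Real.sq_sqrt (by positivity)]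
      field_simp
    calc (2 / π * u) ^ 2 ≤ (Real.sin u) ^ 2 := by
          apply pow_le_pow_left₀ (by positivity) hsin
      _ = r ^ 2 / (α ^ 2 + r ^ 2) := h2
  have h4 : r ^ 2 / (α ^ 2 + r ^ 2) ≤ 1 - (α ^ 2 / (α ^ 2 + r ^ 2)) ^ 2 := by
    have : 1 - (α ^ 2 / (α ^ 2 + r ^ 2)) ^ 2
        = (r ^ 2 * (2 * α ^ 2 + r ^ 2)) / (α ^ 2 + r ^ 2) ^ 2 := by
      field_simp
      ring
    rw [this, div_le_div_iff₀ hp (by positivity)]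
    nlinarith [sq_nonneg (α * r), sq_nonneg r]
  have hX : (2 / π * u) ^ 2 ≤ 1 - (α ^ 2 / (α ^ 2 + r ^ 2)) ^ 2 := hsin2.trans h4
  have hterm2 : 4 / (π ^ 2 * α ^ 2) ≤ (1 - (α ^ 2 / (α ^ 2 + r ^ 2)) ^ 2) / (α * u) ^ 2 := by
    have hval : 4 / (π ^ 2 * α ^ 2) = (2 / π * u) ^ 2 / (α * u) ^ 2 := by
      field_simp
      ring
    rw [hval]
    gcongr
  have hterm1 : 0 ≤ -2 * (-2 * α ^ 2 * r / (α ^ 2 + r ^ 2) ^ 2) / (α * u) := by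
    have : -2 * (-2 * α ^ 2 * r / (α ^ 2 + r ^ 2) ^ 2) / (α * u)
        = 4 * α ^ 2 * r / ((α ^ 2 + r ^ 2) ^ 2 * (α * u)) := by
      field_simp
      ring
    rw [this]
    positivity
  have h8 : 8 / (π ^ 2 * α ^ 2) = 2 * (4 / (π ^ 2 * α ^ 2)) := by ring
  linarith

open Filter Topology in
/-- `R_α(r) → 8/(π²α²)` as `r → ∞`, and `inf_{r>0} R_α(r) = 8/(π²α²)`. -/
theorem stmt_5 (α : ℝ) (hα : 0 < α) :
    Filter.Tendsto (scalarCurv α) Filter.atTop (nhds (8 / (π ^ 2 * α ^ 2))) ∧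
    IsGLB (scalarCurv α '' Set.Ioi 0) (8 / (π ^ 2 * α ^ 2)) := by
  have key := scalarCurv_tendsto hα
  refine ⟨key, ?_, ?_⟩
  · rintro x ⟨r, hr, rfl⟩
    exact scalarCurv_lower hα hr
  · intro b hb
    refine ge_of_tendsto key ?_
    filter_upwards [eventually_gt_atTop (0:ℝ)] with r hr
    exact hb ⟨r, hr, rfl⟩
end

section
/- For α > 0, the scalar curvature function R_α is nonincreasing on (0,∞): for all 0 < r ≤ s one has R_α(s) ≤ R_α(r) (equivalently, its derivative satisfies ∂_r R_α(r) ≤ 0 for all r > 0). -/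
open Real Set

lemma warp_deriv {α : ℝ} (hα : 0 < α) :
    deriv (warp α) = fun r => 1 / (1 + (r / α) ^ 2) := by
  funext r
  have h1 : HasDerivAt (fun r : ℝ => r / α) (1 / α) r := (hasDerivAt_id r).div_const α
  have h2 := ((Real.hasDerivAt_arctan (r / α)).comp r h1).const_mul α
  have h : HasDerivAt (warp α) (1 / (1 + (r / α) ^ 2)) r := by
    refine h2.congr_deriv ?_
    field_simp
  exact h.deriv

lemma warp_deriv2 {α : ℝ} (hα : 0 < α) (r : ℝ) :
    deriv (deriv (warp α)) r = -(2 * r / α ^ 2) / (1 + (r / α) ^ 2) ^ 2 := by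
  rw [warp_deriv hα]
  have hq : (1 : ℝ) + (r / α) ^ 2 ≠ 0 := by positivity
  have h1 : HasDerivAt (fun r : ℝ => 1 + (r / α) ^ 2) (2 * r / α ^ 2) r := by
    have : HasDerivAt (fun r : ℝ => r / α) (1 / α) r := (hasDerivAt_id r).div_const α
    have := (this.pow 2).const_add 1
    exact this.congr_deriv (by ring)
  have h : HasDerivAt (fun r : ℝ => 1 / (1 + (r / α) ^ 2))
      (-(2 * r / α ^ 2) / (1 + (r / α) ^ 2) ^ 2) r := by
    have := h1.inv hq
    simp only [one_div]
    exact this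
  exact h.deriv

/-- auxiliary: first piece of the reduced curvature -/
noncomputable def gA : ℝ → ℝ := fun a => 4 * sin a * cos a ^ 3 / a

/-- auxiliary: second piece -/
noncomputable def gB : ℝ → ℝ := fun a => sin a ^ 2 * (1 + cos a ^ 2) / a ^ 2

lemma key_ineq {a : ℝ} (ha : a ∈ Ioo 0 (π / 2)) : a * cos a ≤ sin a := by
  have h := Real.lt_tan ha.1 ha.2
  have hc : 0 < cos a := Real.cos_pos_of_mem_Ioo ⟨by linarith [ha.1, pi_div_two_pos], ha.2⟩
  rw [Real.tan_eq_sin_div_cos] at h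
  calc a * cos a ≤ (sin a / cos a) * cos a := by nlinarith
    _ = sin a := by field_simp

lemma gA_anti : AntitoneOn gA (Ioo 0 (π / 2)) := by
  have hderiv : ∀ a : ℝ, a ≠ 0 → HasDerivAt gA
      ((4 * (cos a ^ 4 - 3 * sin a ^ 2 * cos a ^ 2) * a - 4 * sin a * cos a ^ 3) / a ^ 2) a := by
    intro a ha
    have h1 : HasDerivAt (fun a : ℝ => 4 * sin a * cos a ^ 3)
        (4 * (cos a ^ 4 - 3 * sin a ^ 2 * cos a ^ 2)) a := by
      have hs := Real.hasDerivAt_sin a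
      have hc := (Real.hasDerivAt_cos a).pow 3
      have := ((hs.const_mul 4).mul hc)
      exact this.congr_deriv (by simp only [Pi.pow_apply]; ring)
    have := h1.div (hasDerivAt_id a) ha
    unfold gA
    exact this.congr_deriv (by simp only [id, mul_one])
  apply antitoneOn_of_deriv_nonpos (convex_Ioo _ _)
  · intro a ha
    exact ((hderiv a ha.1.ne').differentiableAt.continuousAt).continuousWithinAt
  · rw [interior_Ioo]
    intro a ha
    exact (hderiv a ha.1.ne').differentiableAt.differentiableWithinAt
  · rw [interior_Ioo]
    intro a ha
    rw [(hderiv a ha.1.ne').deriv]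
    have hkey := key_ineq ha
    have hs : 0 ≤ sin a := le_of_lt (Real.sin_pos_of_pos_of_lt_pi ha.1 (by linarith [ha.2, pi_pos]))
    have hc : 0 < cos a := Real.cos_pos_of_mem_Ioo ⟨by linarith [ha.1, pi_div_two_pos], ha.2⟩
    have ha2 : (0:ℝ) < a ^ 2 := pow_pos ha.1 2
    apply div_nonpos_of_nonpos_of_nonneg _ (le_of_lt ha2)
    have h1 : cos a ^ 3 * (a * cos a - sin a) ≤ 0 :=
      mul_nonpos_of_nonneg_of_nonpos (pow_nonneg hc.le 3) (by linarith)
    have h2 : (0:ℝ) ≤ a * sin a ^ 2 * cos a ^ 2 :=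
      mul_nonneg (mul_nonneg ha.1.le (sq_nonneg _)) (sq_nonneg _)
    nlinarith [h1, h2]

lemma gB_anti : AntitoneOn gB (Ioo 0 (π / 2)) := by
  have hderiv : ∀ a : ℝ, a ≠ 0 → HasDerivAt gB
      (((2 * sin a * cos a * (1 + cos a ^ 2) + sin a ^ 2 * (2 * cos a * (-sin a))) * a ^ 2
        - sin a ^ 2 * (1 + cos a ^ 2) * (2 * a)) / (a ^ 2) ^ 2) a := by
    intro a ha
    have hs := Real.hasDerivAt_sin a
    have hc := Real.hasDerivAt_cos a
    have h1 : HasDerivAt (fun a : ℝ => sin a ^ 2 * (1 + cos a ^ 2))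
        (2 * sin a * cos a * (1 + cos a ^ 2) + sin a ^ 2 * (2 * cos a * (-sin a))) a := by
      have := (hs.pow 2).mul ((hc.pow 2).const_add 1)
      exact this.congr_deriv (by simp only [Pi.pow_apply]; ring)
    have h2 : HasDerivAt (fun a : ℝ => a ^ 2) (2 * a) a := by
      exact ((hasDerivAt_id a).pow 2).congr_deriv (by simp)
    have := h1.div h2 (pow_ne_zero 2 ha)
    exact this
  apply antitoneOn_of_deriv_nonpos (convex_Ioo _ _)
  · intro a ha
    exact ((hderiv a ha.1.ne').differentiableAt.continuousAt).continuousWithinAt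
  · rw [interior_Ioo]
    intro a ha
    exact (hderiv a ha.1.ne').differentiableAt.differentiableWithinAt
  · rw [interior_Ioo]
    intro a ha
    rw [(hderiv a ha.1.ne').deriv]
    have hkey := key_ineq ha
    have hs : 0 ≤ sin a := le_of_lt (Real.sin_pos_of_pos_of_lt_pi ha.1 (by linarith [ha.2, pi_pos]))
    have hc : 0 < cos a := Real.cos_pos_of_mem_Ioo ⟨by linarith [ha.1, pi_div_two_pos], ha.2⟩
    have ha4 : (0:ℝ) < (a ^ 2) ^ 2 := pow_pos (pow_pos ha.1 2) 2
    apply div_nonpos_of_nonpos_of_nonneg _ (le_of_lt ha4)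
    have hpyth : sin a ^ 2 = 1 - cos a ^ 2 := by
      have := Real.sin_sq_add_cos_sq a; linarith
    have hcos1 : cos a ≤ 1 := Real.cos_le_one a
    have e1 : 4 * a * sin a * cos a ^ 3 ≤ 4 * sin a ^ 2 * cos a ^ 2 := by
      have := mul_le_mul_of_nonneg_left hkey
        (mul_nonneg (by linarith : (0:ℝ) ≤ 4 * sin a) (sq_nonneg (cos a)))
      nlinarith [this]
    have e2 : 4 * sin a ^ 2 * cos a ^ 2 ≤ 2 * sin a ^ 2 * (1 + cos a ^ 2) := by
      nlinarith [sq_nonneg (sin a), hcos1, hc]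
    have hfac : 4 * a * sin a * cos a ^ 3 - 2 * sin a ^ 2 * (1 + cos a ^ 2) ≤ 0 := by linarith
    have hrw : (2 * sin a * cos a * (1 + cos a ^ 2) + sin a ^ 2 * (2 * cos a * (-sin a))) * a ^ 2
        - sin a ^ 2 * (1 + cos a ^ 2) * (2 * a)
        = a * (4 * a * sin a * cos a ^ 3 - 2 * sin a ^ 2 * (1 + cos a ^ 2)) := by
      linear_combination (-2 * a ^ 2 * sin a * cos a) * (Real.sin_sq_add_cos_sq a)
    rw [hrw]
    exact mul_nonpos_of_nonneg_of_nonpos ha.1.le hfac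

lemma trig3 {x : ℝ} (hx : 0 < x) : cos (arctan x) ^ 2 = 1 / (1 + x ^ 2) := by
  rw [Real.cos_arctan, div_pow, one_pow, Real.sq_sqrt (by positivity : (0:ℝ) ≤ 1 + x ^ 2)]

lemma trig2 {x : ℝ} (hx : 0 < x) : sin (arctan x) ^ 2 = x ^ 2 / (1 + x ^ 2) := by
  rw [Real.sin_arctan, div_pow, Real.sq_sqrt (by positivity : (0:ℝ) ≤ 1 + x ^ 2)]

lemma trig1 {x : ℝ} (hx : 0 < x) :
    sin (arctan x) * cos (arctan x) ^ 3 = x / (1 + x ^ 2) ^ 2 := by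
  have hq : (0:ℝ) ≤ 1 + x ^ 2 := by positivity
  rw [Real.sin_arctan, Real.cos_arctan, div_pow, one_pow, div_mul_div_comm, mul_one]
  congr 1
  rw [show Real.sqrt (1 + x ^ 2) * Real.sqrt (1 + x ^ 2) ^ 3
      = (Real.sqrt (1 + x ^ 2) ^ 2) ^ 2 by ring, Real.sq_sqrt hq]

lemma curv_eq {α : ℝ} (hα : 0 < α) {r : ℝ} (hr : 0 < r) :
    scalarCurv α r = 2 / α ^ 2 * (gA (arctan (r / α)) + gB (arctan (r / α))) := by
  have hx : 0 < r / α := div_pos hr hα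
  have ha0 : 0 < arctan (r / α) := by
    rw [← Real.arctan_zero]; exact Real.arctan_strictMono hx
  have hq : (0:ℝ) < 1 + (r / α) ^ 2 := by positivity
  simp only [scalarCurv, gA, gB]
  rw [warp_deriv2 hα, warp_deriv hα]
  simp only [warp, mul_assoc]
  rw [trig1 hx, trig2 hx, trig3 hx]
  field_simp
  ring
/-- `R_α` is nonincreasing on `(0,∞)`: for `0 < r ≤ s`, `R_α(s) ≤ R_α(r)`. -/
theorem stmt_6 (α : ℝ) (hα : 0 < α) :
    ∀ r s : ℝ, 0 < r → r ≤ s → scalarCurv α s ≤ scalarCurv α r := by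
  intro r s hr hrs
  have hs : 0 < s := lt_of_lt_of_le hr hrs
  rw [curv_eq hα hr, curv_eq hα hs]
  have memr : arctan (r / α) ∈ Ioo 0 (π / 2) := by
    constructor
    · rw [← Real.arctan_zero]; exact Real.arctan_strictMono (div_pos hr hα)
    · exact Real.arctan_lt_pi_div_two _
  have mems : arctan (s / α) ∈ Ioo 0 (π / 2) := by
    constructor
    · rw [← Real.arctan_zero]; exact Real.arctan_strictMono (div_pos hs hα)
    · exact Real.arctan_lt_pi_div_two _
  have hle : arctan (r / α) ≤ arctan (s / α) :=
    Real.arctan_strictMono.monotone (by gcongr)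
  have h2α : (0:ℝ) ≤ 2 / α ^ 2 := by positivity
  exact mul_le_mul_of_nonneg_left
    (add_le_add (gA_anti memr mems hle) (gB_anti memr mems hle)) h2α
end
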